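/- Let H be a d-light initialization of a connected weighted graph G, and let π(s,t) be a shortest s–t path in G. If exactly ℓ edges of π(s,t) are absent from H, then there exists a set N of at least d·ℓ/6 vertices such that each vertex of N is joined in H to some vertex of π(s,t) by an edge of weight at most W(s,t). -/

import Mathlib

open scoped ENNReal Classical

/-- The total weight of a walk: the sum of the weights of its edges. -/
noncomputable def walkWeight {V : Type} (G : SimpleGraph V) (w : Sym2 V → ℝ≥0∞)
    {s t : V} (p : G.Walk s t) : ℝ≥0∞ :=
  (p.edges.map w).sum

/-- Shortest-path distance in the weighted graph `(G, w)`, equal to `⊤` if there is no path. -/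
noncomputable def gdist {V : Type} (G : SimpleGraph V) (w : Sym2 V → ℝ≥0∞)
    (s t : V) : ℝ≥0∞ :=
  ⨅ p : G.Walk s t, walkWeight G w p

/-- The maximum edge weight along a walk (0 for the trivial walk). -/
noncomputable def maxEdge {V : Type} (G : SimpleGraph V) (w : Sym2 V → ℝ≥0∞)
    {s t : V} (p : G.Walk s t) : ℝ≥0∞ :=
  (p.edges.map w).foldr max 0

/-- `π` assigns to each ordered vertex pair a shortest path: a walk whose total
weight equals the shortest-path distance. -/
def IsShortestPathScheme {V : Type} (G : SimpleGraph V) (w : Sym2 V → ℝ≥0∞)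
    (π : (s t : V) → G.Walk s t) : Prop :=
  ∀ s t : V, walkWeight G w (π s t) = gdist G w s t

/-- The edge weights are positive and finite on all edges of `G`. -/
def PosWeights {V : Type} (G : SimpleGraph V) (w : Sym2 V → ℝ≥0∞) : Prop :=
  ∀ e ∈ G.edgeSet, 0 < w e ∧ w e ≠ ⊤

/-- `H` is a `d`-light initialization of `(G, w)`, witnessed by the selection `S` which picks,
for each vertex `v`, the `d` lightest edges incident to `v` (all of them if `deg v < d`):
`H` consists exactly of the selected edges. -/
def IsDLightInit {V : Type} [Fintype V] (G : SimpleGraph V) (w : Sym2 V → ℝ≥0∞) (d : ℕ)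
    (H : SimpleGraph V) (S : V → Finset V) : Prop :=
  (∀ v : V, ∀ u ∈ S v, G.Adj v u) ∧
  (∀ v : V, (S v).card = min d (G.neighborSet v).ncard) ∧
  (∀ v u : V, G.Adj v u → u ∉ S v → ∀ x ∈ S v, w s(v, x) ≤ w s(v, u)) ∧
  (∀ a b : V, H.Adj a b ↔ G.Adj a b ∧ (b ∈ S a ∨ a ∈ S b))

section Helpers

variable {V : Type}

lemma listSum (L : List ℝ≥0∞) : L.sum = ∑ i ∈ Finset.range L.length, L.getD i 0 := by
  induction L with
  | nil => simp
  | cons a L ih =>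
      rw [List.sum_cons, ih, List.length_cons, Finset.sum_range_succ']
      simp [List.getD_cons_succ, List.getD_cons_zero, add_comm]

lemma le_foldr_max (L : List ℝ≥0∞) (a : ℝ≥0∞) (h : a ∈ L) : a ≤ L.foldr max 0 := by
  induction L with
  | nil => simp at h
  | cons b L ih =>
      rcases List.mem_cons.1 h with rfl | h
      · exact le_max_left _ _
      · exact le_trans (ih h) (le_max_right _ _)

lemma filter_count {α : Type} (L : List α) (P : α → Bool) (junk : α) :
    ((Finset.range L.length).filter (fun m => P (L.getD m junk) = true)).card
      = (L.filter P).length := by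
  induction L using List.reverseRecOn with
  | nil => simp
  | append_singleton L a ih =>
      have hlen : (L ++ [a]).length = L.length + 1 := by simp
      rw [hlen, Finset.range_add_one, Finset.filter_insert]
      have hmem : ∀ m ∈ Finset.range L.length,
          (P ((L ++ [a]).getD m junk)) ↔ (P (L.getD m junk)) := by
        intro m hm
        rw [List.getD_append _ _ _ _ (Finset.mem_range.1 hm)]
      rw [Finset.filter_congr hmem, List.filter_append]
      have hgd : (L ++ [a]).getD L.length junk = a := by
        rw [List.getD_append_right _ _ _ _ (le_refl _)]
        simp
      rw [hgd]
      by_cases hPa : P a = true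
      · rw [if_pos hPa, Finset.card_insert_of_notMem (by simp), ih]
        simp [hPa]
      · rw [if_neg hPa, ih]
        simp [hPa]

end Helpers

section WalkLemmas

variable {V : Type} {G : SimpleGraph V} (w : Sym2 V → ℝ≥0∞)

/-- edge weight at position `m` of the walk. -/
noncomputable def wWalk {a b : V} (p : G.Walk a b) (m : ℕ) : ℝ≥0∞ :=
  (p.edges.map w).getD m 0

lemma walkWeight_nil {a : V} : walkWeight G w (SimpleGraph.Walk.nil : G.Walk a a) = 0 := by
  simp [walkWeight]

lemma walkWeight_cons {a b c : V} (h : G.Adj a b) (p : G.Walk b c) :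
    walkWeight G w (SimpleGraph.Walk.cons h p) = w s(a, b) + walkWeight G w p := by
  simp [walkWeight]

lemma walkWeight_append {a b c : V} (p : G.Walk a b) (q : G.Walk b c) :
    walkWeight G w (p.append q) = walkWeight G w p + walkWeight G w q := by
  simp [walkWeight, SimpleGraph.Walk.edges_append]

lemma walkWeight_eq_sum {a b : V} (p : G.Walk a b) :
    walkWeight G w p = ∑ m ∈ Finset.range p.length, wWalk w p m := by
  rw [walkWeight, listSum]
  simp [wWalk, p.length_edges]

lemma wWalk_cons_zero {a b c : V} (h : G.Adj a b) (p : G.Walk b c) :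
    wWalk w (SimpleGraph.Walk.cons h p) 0 = w s(a, b) := by
  simp [wWalk]

lemma wWalk_cons_succ {a b c : V} (h : G.Adj a b) (p : G.Walk b c) (m : ℕ) :
    wWalk w (SimpleGraph.Walk.cons h p) (m + 1) = wWalk w p m := by
  simp [wWalk]

lemma edges_getD {a b : V} (p : G.Walk a b) (junk : Sym2 V) :
    ∀ m, m < p.length → p.edges.getD m junk = s(p.getVert m, p.getVert (m + 1)) := by
  induction p with
  | nil => intro m hm; simp at hm
  | cons h q ih =>
      intro m hm
      cases m with
      | zero =>
          simp [SimpleGraph.Walk.edges_cons, SimpleGraph.Walk.getVert_cons_succ]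
      | succ m =>
          rw [SimpleGraph.Walk.edges_cons, List.getD_cons_succ,
            SimpleGraph.Walk.getVert_cons_succ, SimpleGraph.Walk.getVert_cons_succ]
          exact ih m (by simpa using hm)

lemma getD_map_lt {L : List (Sym2 V)} {m : ℕ} (h : m < L.length) (junk : Sym2 V) :
    (L.map w).getD m 0 = w (L.getD m junk) := by
  rw [List.getD_eq_getElem?_getD, List.getD_eq_getElem?_getD, List.getElem?_map,
    List.getElem?_eq_getElem h]
  rfl

lemma wWalk_eq {a b : V} (p : G.Walk a b) {m : ℕ} (hm : m < p.length) :
    wWalk w p m = w s(p.getVert m, p.getVert (m + 1)) := by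
  have hm' : m < p.edges.length := by rwa [p.length_edges]
  rw [wWalk, getD_map_lt w hm' s(a, a), edges_getD p s(a, a) m hm]

lemma wWalk_mem_edgeSet {a b : V} (p : G.Walk a b) {m : ℕ} (hm : m < p.length) :
    s(p.getVert m, p.getVert (m + 1)) ∈ G.edgeSet := by
  have hm' : m < p.edges.length := by rwa [p.length_edges]
  have : p.edges.getD m s(a, a) ∈ p.edges := by
    rw [List.getD_eq_getElem?_getD, List.getElem?_eq_getElem hm']
    exact List.getElem_mem _
  rw [edges_getD p s(a, a) m hm] at this
  exact p.edges_subset_edgeSet this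

lemma wWalk_ne_top {a b : V} (hw : PosWeights G w) (p : G.Walk a b) (m : ℕ) :
    wWalk w p m ≠ ⊤ := by
  by_cases hm : m < p.length
  · rw [wWalk_eq w p hm]
    exact (hw _ (wWalk_mem_edgeSet p hm)).2
  · rw [wWalk, List.getD_eq_default]
    · exact ENNReal.zero_ne_top
    · rw [List.length_map, p.length_edges]; omega

lemma walk_split {a b : V} (p : G.Walk a b) :
    ∀ j, j ≤ p.length → ∃ (q₁ : G.Walk a (p.getVert j)) (q₂ : G.Walk (p.getVert j) b),
      walkWeight G w q₁ = ∑ m ∈ Finset.range j, wWalk w p m ∧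
      walkWeight G w q₂ = ∑ m ∈ Finset.Ico j p.length, wWalk w p m := by
  induction p with
  | nil =>
      intro j hj
      simp only [SimpleGraph.Walk.length_nil, Nat.le_zero] at hj
      subst hj
      exact ⟨SimpleGraph.Walk.nil, SimpleGraph.Walk.nil, by simp [walkWeight], by simp [walkWeight]⟩
  | cons h q ih =>
      intro j hj
      cases j with
      | zero =>
          refine ⟨SimpleGraph.Walk.nil, SimpleGraph.Walk.cons h q, walkWeight_nil w, ?_⟩
          rw [walkWeight_eq_sum, Finset.range_eq_Ico]
          rfl
      | succ j =>
          have hj' : j ≤ q.length := by simpa [SimpleGraph.Walk.length_cons] using hj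
          obtain ⟨q₁, q₂, hq₁, hq₂⟩ := ih j hj'
          rw [show (SimpleGraph.Walk.cons h q).getVert (j + 1) = q.getVert j from
            SimpleGraph.Walk.getVert_cons_succ q h]
          refine ⟨SimpleGraph.Walk.cons h q₁, q₂, ?_, ?_⟩
          · rw [walkWeight_cons, hq₁, Finset.sum_range_succ' (fun m => wWalk w (SimpleGraph.Walk.cons h q) m)]
            simp only [wWalk_cons_succ, wWalk_cons_zero]
            rw [add_comm]
          · rw [hq₂, SimpleGraph.Walk.length_cons,
              Finset.sum_Ico_eq_sum_range, Finset.sum_Ico_eq_sum_range]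
            have hlen : q.length + 1 - (j + 1) = q.length - j := by omega
            rw [hlen]
            refine Finset.sum_congr rfl fun i _ => ?_
            rw [show j + 1 + i = (j + i) + 1 by omega, wWalk_cons_succ]

lemma key_ineq (hw : PosWeights G w) {s t : V} (p : G.Walk s t)
    (hp : walkWeight G w p = gdist G w s t) (j j' : ℕ) (hjj : j ≤ j') (hj' : j' + 1 ≤ p.length)
    (x : V) (h1 : G.Adj (p.getVert j) x) (h2 : G.Adj x (p.getVert (j' + 1))) :
    ∑ m ∈ Finset.Ico j (j' + 1), wWalk w p m
      ≤ w s(p.getVert j, x) + w s(x, p.getVert (j' + 1)) := by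
  obtain ⟨q₁, _, hq₁, -⟩ := walk_split w p j (by omega)
  obtain ⟨-, r₂, -, hr₂⟩ := walk_split w p (j' + 1) hj'
  set A := ∑ m ∈ Finset.range j, wWalk w p m with hA
  set M := ∑ m ∈ Finset.Ico j (j' + 1), wWalk w p m with hM
  set B := ∑ m ∈ Finset.Ico (j' + 1) p.length, wWalk w p m with hB
  have hAne : A ≠ ⊤ := by
    rw [hA]
    intro hc
    obtain ⟨m, -, hm⟩ := ENNReal.sum_eq_top.1 hc
    exact wWalk_ne_top w hw p m hm
  have hBne : B ≠ ⊤ := by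
    rw [hB]
    intro hc
    obtain ⟨m, -, hm⟩ := ENNReal.sum_eq_top.1 hc
    exact wWalk_ne_top w hw p m hm
  set detour : G.Walk s t := q₁.append (SimpleGraph.Walk.cons h1 (SimpleGraph.Walk.cons h2 r₂))
    with hdet
  have hle : gdist G w s t ≤ walkWeight G w detour := by
    unfold gdist
    exact iInf_le _ detour
  have hwd : walkWeight G w detour
      = A + (w s(p.getVert j, x) + (w s(x, p.getVert (j' + 1)) + B)) := by
    rw [hdet, walkWeight_append, walkWeight_cons, walkWeight_cons, hq₁, hr₂]
  have hsplit : walkWeight G w p = A + M + B := by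
    rw [walkWeight_eq_sum, Finset.range_eq_Ico, hA, hM, hB, Finset.range_eq_Ico,
      Finset.sum_Ico_consecutive _ (Nat.zero_le j) (by omega : j ≤ j' + 1),
      Finset.sum_Ico_consecutive _ (by omega : (0:ℕ) ≤ j' + 1) hj']
  have hmain : A + M + B ≤ A + (w s(p.getVert j, x) + (w s(x, p.getVert (j' + 1)) + B)) := by
    rw [← hwd, ← hsplit, hp]
    exact hle
  have h1' : A + (M + B) ≤ A + ((w s(p.getVert j, x) + w s(x, p.getVert (j' + 1))) + B) := by
    calc A + (M + B) = A + M + B := by ring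
    _ ≤ A + (w s(p.getVert j, x) + (w s(x, p.getVert (j' + 1)) + B)) := hmain
    _ = A + ((w s(p.getVert j, x) + w s(x, p.getVert (j' + 1))) + B) := by ring
  have h2' := (ENNReal.add_le_add_iff_left hAne).1 h1'
  exact (ENNReal.add_le_add_iff_right hBne).1 h2'

end WalkLemmas

section Anchors

variable (ω : ℕ → ℝ≥0∞)

lemma exists_anchors_down : ∀ t : ℕ, ∃ A : Finset ℕ,
    t ∈ A ∧ (∀ a ∈ A, a ≤ t) ∧
    (∀ i ∈ A, ∀ k ∈ A, i < k → ω i < ∑ m ∈ Finset.Ioo i k, ω m) ∧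
    (∀ i, i < t → i ∉ A → ∃ k ∈ A, i < k ∧ ∑ m ∈ Finset.Ioo i k, ω m ≤ ω i) := by
  intro t
  induction t using Nat.strong_induction_on with
  | _ t ih =>
    by_cases hne : ((Finset.range t).filter (fun i => ω i < ∑ m ∈ Finset.Ioo i t, ω m)).Nonempty
    · set V := (Finset.range t).filter (fun i => ω i < ∑ m ∈ Finset.Ioo i t, ω m) with hV
      set i₀ := V.max' hne with hi₀
      have hi₀V : i₀ ∈ V := V.max'_mem hne
      have hi₀t : i₀ < t := Finset.mem_range.1 (Finset.mem_filter.1 hi₀V).1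
      have hi₀w : ω i₀ < ∑ m ∈ Finset.Ioo i₀ t, ω m := (Finset.mem_filter.1 hi₀V).2
      obtain ⟨A₀, hA1, hA2, hA3, hA4⟩ := ih i₀ hi₀t
      refine ⟨insert t A₀, Finset.mem_insert_self _ _, ?_, ?_, ?_⟩
      · intro a ha
        rcases Finset.mem_insert.1 ha with h | h
        · omega
        · exact le_trans (hA2 a h) (le_of_lt hi₀t)
      · intro i hi k hk hik
        rcases Finset.mem_insert.1 hi with h1 | h1
        · -- i = t
          rcases Finset.mem_insert.1 hk with h2 | h2
          · omega
          · exact absurd hik (by have := hA2 k h2; omega)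
        · rcases Finset.mem_insert.1 hk with h2 | h2
          · -- k = t
            rw [h2]
            by_cases hii : i = i₀
            · rw [hii]; exact hi₀w
            · have hilt : i < i₀ := lt_of_le_of_ne (hA2 i h1) hii
              refine lt_of_lt_of_le (hA3 i h1 i₀ hA1 hilt) ?_
              exact Finset.sum_le_sum_of_subset (Finset.Ioo_subset_Ioo (le_refl _) (le_of_lt hi₀t))
          · exact hA3 i h1 k h2 hik
      · intro i hit hnot
        have hne1 : i ∉ A₀ := fun hc => hnot (Finset.mem_insert_of_mem hc)
        rcases lt_trichotomy i i₀ with hlt | heq | hgt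
        · obtain ⟨k, hkA, hik, hk⟩ := hA4 i hlt hne1
          exact ⟨k, Finset.mem_insert_of_mem hkA, hik, hk⟩
        · exact absurd (heq ▸ hA1) hne1
        · refine ⟨t, Finset.mem_insert_self _ _, hit, ?_⟩
          by_contra hc
          push_neg at hc
          have hiV : i ∈ V := Finset.mem_filter.2 ⟨Finset.mem_range.2 hit, hc⟩
          have := Finset.le_max' V i hiV
          omega
    · refine ⟨{t}, Finset.mem_singleton_self _, by simp, ?_, ?_⟩
      · intro i hi k hk hik
        rw [Finset.mem_singleton] at hi hk
        omega
      · intro i hit hnot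
        refine ⟨t, Finset.mem_singleton_self _, hit, ?_⟩
        by_contra hc
        push_neg at hc
        exact hne ⟨i, Finset.mem_filter.2 ⟨Finset.mem_range.2 hit, hc⟩⟩

lemma exists_anchors_up (ℓ : ℕ) : ∀ c t : ℕ, t < ℓ → ℓ - t ≤ c → ∃ B : Finset ℕ,
    t ∈ B ∧ (∀ b ∈ B, t ≤ b ∧ b < ℓ) ∧
    (∀ i ∈ B, ∀ k ∈ B, i < k → ω k < ∑ m ∈ Finset.Ioo i k, ω m) ∧
    (∀ i, t < i → i < ℓ → i ∉ B → ∃ m ∈ B, m < i ∧ ∑ j ∈ Finset.Ioo m i, ω j ≤ ω i) := by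
  intro c
  induction c with
  | zero => intro t ht hc; omega
  | succ c ihc =>
    intro t ht hc
    by_cases hne : ((Finset.Ioo t ℓ).filter (fun k => ω k < ∑ m ∈ Finset.Ioo t k, ω m)).Nonempty
    · set V := (Finset.Ioo t ℓ).filter (fun k => ω k < ∑ m ∈ Finset.Ioo t k, ω m) with hV
      set k₀ := V.min' hne with hk₀
      have hk₀V : k₀ ∈ V := V.min'_mem hne
      have hk₀io : t < k₀ ∧ k₀ < ℓ := Finset.mem_Ioo.1 (Finset.mem_filter.1 hk₀V).1
      have hk₀w : ω k₀ < ∑ m ∈ Finset.Ioo t k₀, ω m := (Finset.mem_filter.1 hk₀V).2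
      obtain ⟨B₀, hB1, hB2, hB3, hB4⟩ := ihc k₀ hk₀io.2 (by omega)
      refine ⟨insert t B₀, Finset.mem_insert_self _ _, ?_, ?_, ?_⟩
      · intro b hb
        rcases Finset.mem_insert.1 hb with h | h
        · omega
        · exact ⟨le_trans (le_of_lt hk₀io.1) (hB2 b h).1, (hB2 b h).2⟩
      · intro i hi k hk hik
        rcases Finset.mem_insert.1 hi with h1 | h1
        · -- i = t
          rcases Finset.mem_insert.1 hk with h2 | h2
          · omega
          · rw [h1]
            by_cases hkk : k = k₀
            · rw [hkk]; exact hk₀w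
            · have hklt : k₀ < k := lt_of_le_of_ne (hB2 k h2).1 (Ne.symm hkk)
              refine lt_of_lt_of_le (hB3 k₀ hB1 k h2 hklt) ?_
              exact Finset.sum_le_sum_of_subset
                (Finset.Ioo_subset_Ioo (le_of_lt hk₀io.1) (le_refl _))
        · rcases Finset.mem_insert.1 hk with h2 | h2
          · exact absurd hik (by have := (hB2 i h1).1; omega)
          · exact hB3 i h1 k h2 hik
      · intro i hti hil hnot
        have hne1 : i ∉ B₀ := fun hc' => hnot (Finset.mem_insert_of_mem hc')
        rcases lt_trichotomy i k₀ with hlt | heq | hgt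
        · refine ⟨t, Finset.mem_insert_self _ _, hti, ?_⟩
          by_contra hc'
          push_neg at hc'
          have hiV : i ∈ V := Finset.mem_filter.2 ⟨Finset.mem_Ioo.2 ⟨hti, hil⟩, hc'⟩
          have := Finset.min'_le V i hiV
          omega
        · exact absurd (heq ▸ hB1) hne1
        · obtain ⟨m, hmB, hmi, hm⟩ := hB4 i hgt hil hne1
          exact ⟨m, Finset.mem_insert_of_mem hmB, hmi, hm⟩
    · refine ⟨{t}, Finset.mem_singleton_self _, by simp [ht], ?_, ?_⟩
      · intro i hi k hk hik
        rw [Finset.mem_singleton] at hi hk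
        omega
      · intro i hti hil hnot
        refine ⟨t, Finset.mem_singleton_self _, hti, ?_⟩
        by_contra hc'
        push_neg at hc'
        exact hne ⟨i, Finset.mem_filter.2 ⟨Finset.mem_Ioo.2 ⟨hti, hil⟩, hc'⟩⟩

end Anchors

lemma abs_count {V : Type} [DecidableEq V] (d ℓ : ℕ) (ω : ℕ → ℝ≥0∞)
    (X Y : ℕ → Finset V) (N : Finset V)
    (hpos : ∀ i, i < ℓ → ω i ≠ 0) (hfin : ∀ i, i < ℓ → ω i ≠ ⊤)
    (hX : ∀ i, i < ℓ → (X i).card = d) (hY : ∀ i, i < ℓ → (Y i).card = d)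
    (hXN : ∀ i, i < ℓ → X i ⊆ N) (hYN : ∀ i, i < ℓ → Y i ⊆ N)
    (hLL : ∀ i k, i < k → k < ℓ → (X i ∩ X k).Nonempty → ∑ m ∈ Finset.Ioo i k, ω m ≤ ω k)
    (hRR : ∀ i k, i < k → k < ℓ → (Y i ∩ Y k).Nonempty → ∑ m ∈ Finset.Ioo i k, ω m ≤ ω i) :
    d * ℓ ≤ 6 * N.card := by
  rcases Nat.eq_zero_or_pos ℓ with rfl | hℓpos
  · simp
  obtain ⟨A, hA1, hA2, hA3, hA4⟩ := exists_anchors_down ω (ℓ - 1)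
  obtain ⟨B, hB1, hB2, hB3, hB4⟩ := exists_anchors_up ω ℓ ℓ 0 hℓpos (by omega)
  have hAlt : ∀ a ∈ A, a < ℓ := fun a ha => by have := hA2 a ha; omega
  have hBlt : ∀ b ∈ B, b < ℓ := fun b hb => (hB2 b hb).2
  -- d * A.card ≤ N.card  via pairwise disjoint Y-sets over A
  have cardA : d * A.card ≤ N.card := by
    have hdisj : ∀ i ∈ (A : Set ℕ), ∀ k ∈ (A : Set ℕ), i ≠ k → Disjoint (Y i) (Y k) := by
      intro i hi k hk hik
      rw [Finset.mem_coe] at hi hk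
      by_contra hc
      rcases Finset.not_disjoint_iff_nonempty_inter.1 hc with hne
      rcases lt_or_gt_of_ne hik with h | h
      · exact absurd (hRR i k h (hAlt k hk) hne) (not_le.2 (hA3 i hi k hk h))
      · have hne' : (Y k ∩ Y i).Nonempty := by rwa [Finset.inter_comm]
        exact absurd (hRR k i h (hAlt i hi) hne') (not_le.2 (hA3 k hk i hi h))
    have hcard : (A.biUnion Y).card = ∑ i ∈ A, (Y i).card := Finset.card_biUnion
      (fun i hi k hk hik => hdisj i hi k hk hik)
    have hsum : ∑ i ∈ A, (Y i).card = A.card * d := by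
      rw [Finset.sum_congr rfl (fun i hi => hY i (hAlt i hi)), Finset.sum_const, smul_eq_mul]
    have hsub : A.biUnion Y ⊆ N := Finset.biUnion_subset.2 (fun i hi => hYN i (hAlt i hi))
    calc d * A.card = A.card * d := by ring
    _ = (A.biUnion Y).card := by rw [hcard, hsum]
    _ ≤ N.card := Finset.card_le_card hsub
  have cardB : d * B.card ≤ N.card := by
    have hdisj : ∀ i ∈ (B : Set ℕ), ∀ k ∈ (B : Set ℕ), i ≠ k → Disjoint (X i) (X k) := by
      intro i hi k hk hik
      rw [Finset.mem_coe] at hi hk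
      by_contra hc
      rcases Finset.not_disjoint_iff_nonempty_inter.1 hc with hne
      rcases lt_or_gt_of_ne hik with h | h
      · exact absurd (hLL i k h (hBlt k hk) hne) (not_le.2 (hB3 i hi k hk h))
      · have hne' : (X k ∩ X i).Nonempty := by rwa [Finset.inter_comm]
        exact absurd (hLL k i h (hBlt i hi) hne') (not_le.2 (hB3 k hk i hi h))
    have hcard : (B.biUnion X).card = ∑ i ∈ B, (X i).card := Finset.card_biUnion
      (fun i hi k hk hik => hdisj i hi k hk hik)
    have hsum : ∑ i ∈ B, (X i).card = B.card * d := by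
      rw [Finset.sum_congr rfl (fun i hi => hX i (hBlt i hi)), Finset.sum_const, smul_eq_mul]
    have hsub : B.biUnion X ⊆ N := Finset.biUnion_subset.2 (fun i hi => hXN i (hBlt i hi))
    calc d * B.card = B.card * d := by ring
    _ = (B.biUnion X).card := by rw [hcard, hsum]
    _ ≤ N.card := Finset.card_le_card hsub
  -- coverage: every index has an anchor within distance 2
  have hcov : ∀ j, j < ℓ → ∃ a, a ∈ A ∪ B ∧ j ≤ a ∧ a ≤ j + 2 := by
    intro j hj
    by_cases hj0 : j ∈ A ∪ B
    · exact ⟨j, hj0, le_refl _, by omega⟩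
    by_cases hj1 : j + 1 ∈ A ∪ B
    · exact ⟨j + 1, hj1, by omega, by omega⟩
    by_cases hj2 : j + 2 ∈ A ∪ B
    · exact ⟨j + 2, hj2, by omega, le_refl _⟩
    exfalso
    have hAin : ∀ m, m ∈ A → m ∈ A ∪ B := fun m hm => Finset.mem_union_left _ hm
    have hBin : ∀ m, m ∈ B → m ∈ A ∪ B := fun m hm => Finset.mem_union_right _ hm
    have hjA : j ≠ ℓ - 1 := fun hc => hj0 (hAin _ (hc ▸ hA1))
    have hj1A : j + 1 ≠ ℓ - 1 := fun hc => hj1 (hAin _ (hc ▸ hA1))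
    have hj2lt : j + 2 < ℓ := by omega
    -- Y-skip at j
    obtain ⟨k, hkA, hjk, hgapk⟩ := hA4 j (by omega) (fun hc => hj0 (hAin _ hc))
    have hk3 : j + 3 ≤ k := by
      have h1 : k ≠ j + 1 := fun hc => hj1 (hAin _ (hc ▸ hkA))
      have h2 : k ≠ j + 2 := fun hc => hj2 (hAin _ (hc ▸ hkA))
      omega
    -- X-skip at j+2
    obtain ⟨m, hmB, hmlt, hgapm⟩ := hB4 (j + 2) (by omega) hj2lt (fun hc => hj2 (hBin _ hc))
    have hmj : m < j := by
      have h1 : m ≠ j := fun hc => hj0 (hBin _ (hc ▸ hmB))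
      have h2 : m ≠ j + 1 := fun hc => hj1 (hBin _ (hc ▸ hmB))
      omega
    have hsub1 : ({j + 1, j + 2} : Finset ℕ) ⊆ Finset.Ioo j k := by
      intro z hz
      rcases Finset.mem_insert.1 hz with rfl | hz
      · exact Finset.mem_Ioo.2 (by omega)
      · rw [Finset.mem_singleton] at hz
        exact Finset.mem_Ioo.2 (by omega)
    have hsub2 : ({j, j + 1} : Finset ℕ) ⊆ Finset.Ioo m (j + 2) := by
      intro z hz
      rcases Finset.mem_insert.1 hz with rfl | hz
      · exact Finset.mem_Ioo.2 (by omega)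
      · rw [Finset.mem_singleton] at hz
        exact Finset.mem_Ioo.2 (by omega)
    have hpair1 : ω (j + 1) + ω (j + 2) ≤ ω j := by
      calc ω (j + 1) + ω (j + 2) = ∑ z ∈ ({j + 1, j + 2} : Finset ℕ), ω z := by
            rw [Finset.sum_pair (by omega : j + 1 ≠ j + 2)]
      _ ≤ ∑ z ∈ Finset.Ioo j k, ω z := Finset.sum_le_sum_of_subset hsub1
      _ ≤ ω j := hgapk
    have hpair2 : ω j + ω (j + 1) ≤ ω (j + 2) := by
      calc ω j + ω (j + 1) = ∑ z ∈ ({j, j + 1} : Finset ℕ), ω z := by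
            rw [Finset.sum_pair (by omega : j ≠ j + 1)]
      _ ≤ ∑ z ∈ Finset.Ioo m (j + 2), ω z := Finset.sum_le_sum_of_subset hsub2
      _ ≤ ω (j + 2) := hgapm
    have h3 : ω j + (ω (j + 1) + ω (j + 1)) ≤ ω j + 0 := by
      calc ω j + (ω (j + 1) + ω (j + 1)) = ω (j + 1) + (ω j + ω (j + 1)) := by ring
      _ ≤ ω (j + 1) + ω (j + 2) := add_le_add_right hpair2 _
      _ ≤ ω j := hpair1
      _ = ω j + 0 := by rw [add_zero]
    have h4 : ω (j + 1) + ω (j + 1) ≤ 0 := (ENNReal.add_le_add_iff_left (hfin j (by omega))).1 h3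
    have h5 : ω (j + 1) = 0 := by
      have := le_zero_iff.1 h4
      rcases add_eq_zero.1 this with ⟨h, -⟩
      exact h
    exact hpos (j + 1) (by omega) h5
  -- counting via fibers
  have hcount : ℓ ≤ 3 * (A.card + B.card) := by
    set f : ℕ → ℕ := fun j => if h : j < ℓ then (hcov j h).choose else 0 with hf
    have hfspec : ∀ j, j < ℓ → f j ∈ A ∪ B ∧ j ≤ f j ∧ f j ≤ j + 2 := by
      intro j hj
      rw [hf]
      simp only [dif_pos hj]
      exact (hcov j hj).choose_spec
    have hmain : (Finset.range ℓ).card ≤ 3 * ((Finset.range ℓ).image f).card := by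
      apply Finset.card_le_mul_card_image
      intro b hb
      have hsubf : (Finset.range ℓ).filter (fun a => f a = b) ⊆ Finset.Icc (b - 2) b := by
        intro a ha
        obtain ⟨ha1, ha2⟩ := Finset.mem_filter.1 ha
        obtain ⟨-, h1, h2⟩ := hfspec a (Finset.mem_range.1 ha1)
        rw [ha2] at h1 h2
        exact Finset.mem_Icc.2 ⟨by omega, h1⟩
      calc ((Finset.range ℓ).filter (fun a => f a = b)).card ≤ (Finset.Icc (b - 2) b).card :=
            Finset.card_le_card hsubf
      _ ≤ 3 := by rw [Nat.card_Icc]; omega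
    have himg : (Finset.range ℓ).image f ⊆ A ∪ B := by
      intro b hb
      obtain ⟨j, hj, rfl⟩ := Finset.mem_image.1 hb
      exact (hfspec j (Finset.mem_range.1 hj)).1
    calc ℓ = (Finset.range ℓ).card := by rw [Finset.card_range]
    _ ≤ 3 * ((Finset.range ℓ).image f).card := hmain
    _ ≤ 3 * (A ∪ B).card := by
        exact Nat.mul_le_mul_left 3 (Finset.card_le_card himg)
    _ ≤ 3 * (A.card + B.card) := Nat.mul_le_mul_left 3 (Finset.card_union_le A B)
  have : d * ℓ ≤ d * (3 * (A.card + B.card)) := Nat.mul_le_mul_left d hcount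
  have hexp : d * (3 * (A.card + B.card)) = 3 * (d * A.card) + 3 * (d * B.card) := by ring
  omega

/-- Let `H` be a `d`-light initialization of a connected weighted graph `G`,
and let `π(s,t)` be a shortest `s`–`t` path in `G`. If exactly `ℓ` edges of `π(s,t)` are absent
from `H`, then there is a set `N` of at least `d·ℓ/6` vertices, each joined in `H` to some
vertex of `π(s,t)` by an edge of weight at most `W(s,t)`. -/
theorem d_light_init_neighbors
    (V : Type) [Fintype V] (G : SimpleGraph V) (w : Sym2 V → ℝ≥0∞)
    (hconn : G.Connected) (hw : PosWeights G w)
    (π : (s t : V) → G.Walk s t) (hπ : IsShortestPathScheme G w π)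
    (d : ℕ) (H : SimpleGraph V) (S : V → Finset V)
    (hinit : IsDLightInit G w d H S)
    (s t : V) (ℓ : ℕ)
    (hℓ : ((π s t).edges.filter (fun e => e ∉ H.edgeSet)).length = ℓ) :
    ∃ N : Finset V, ((d : ℝ) * ℓ) / 6 ≤ N.card ∧
      ∀ x ∈ N, ∃ y ∈ (π s t).support, H.Adj x y ∧ w s(x, y) ≤ maxEdge G w (π s t) := by
  classical
  set p := π s t with hpdef
  have hwp : walkWeight G w p = gdist G w s t := hπ s t
  obtain ⟨hS1, hS2, hS3, hS4⟩ := hinit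
  -- consequences of an edge being missing
  have hmiss : ∀ m, m < p.length → s(p.getVert m, p.getVert (m + 1)) ∉ H.edgeSet →
      p.getVert (m + 1) ∉ S (p.getVert m) ∧ p.getVert m ∉ S (p.getVert (m + 1)) ∧
        G.Adj (p.getVert m) (p.getVert (m + 1)) := by
    intro m hm hnot
    have hadj : G.Adj (p.getVert m) (p.getVert (m + 1)) :=
      (G.mem_edgeSet).1 (wWalk_mem_edgeSet p hm)
    have hnH : ¬ H.Adj (p.getVert m) (p.getVert (m + 1)) := fun hc =>
      hnot ((H.mem_edgeSet).2 hc)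
    rw [hS4] at hnH
    push_neg at hnH
    obtain ⟨h1, h2⟩ := hnH hadj
    exact ⟨h1, h2, hadj⟩
  -- the selection set of an endpoint of a missing edge has exactly d elements
  have cardS : ∀ v u : V, G.Adj v u → u ∉ S v → (S v).card = d := by
    intro v u hadj hu
    have h2 := hS2 v
    rcases Nat.le_total d (G.neighborSet v).ncard with hle | hle
    · rw [h2, min_eq_left hle]
    · exfalso
      have hmin : min d (G.neighborSet v).ncard = (G.neighborSet v).ncard := min_eq_right hle
      have hfin : (G.neighborSet v).Finite := Set.toFinite _
      have hsub : S v ⊆ hfin.toFinset := fun z hz => hfin.mem_toFinset.2 (hS1 v z hz)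
      have hcard : hfin.toFinset.card ≤ (S v).card := by
        rw [h2, hmin, Set.ncard_eq_toFinset_card _ hfin]
      have heq : S v = hfin.toFinset := Finset.eq_of_subset_of_card_le hsub hcard
      apply hu
      rw [heq]
      exact hfin.mem_toFinset.2 hadj
  -- missing positions
  set M : Finset ℕ := (Finset.range p.edges.length).filter
    (fun m => p.edges.getD m s(t, t) ∉ H.edgeSet) with hM
  have hMcard : M.card = ℓ := by
    have h := filter_count p.edges (fun e => decide (e ∉ H.edgeSet)) s(t, t)
    rw [hM, show (Finset.filter (fun m => p.edges.getD m s(t, t) ∉ H.edgeSet)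
        (Finset.range p.edges.length))
      = Finset.filter (fun m => (decide (p.edges.getD m s(t, t) ∉ H.edgeSet)) = true)
        (Finset.range p.edges.length) from Finset.filter_congr (fun m _ => by simp), h]
    exact hℓ
  set σ := M.orderIsoOfFin hMcard with hσ
  set pos : ℕ → ℕ := fun i => if h : i < ℓ then ((σ ⟨i, h⟩ : {x // x ∈ M}) : ℕ) else 0
    with hposdef
  have posmem : ∀ i, i < ℓ → pos i ∈ M := by
    intro i h
    rw [hposdef]
    simp only [dif_pos h]
    exact (σ ⟨i, h⟩).2
  have poslt : ∀ i, i < ℓ → pos i < p.length := by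
    intro i h
    have := Finset.mem_range.1 (Finset.mem_filter.1 (posmem i h)).1
    rwa [p.length_edges] at this
  have posmiss : ∀ i, i < ℓ →
      s(p.getVert (pos i), p.getVert (pos i + 1)) ∉ H.edgeSet := by
    intro i h
    have h1 := (Finset.mem_filter.1 (posmem i h)).2
    rwa [edges_getD p s(t, t) (pos i) (poslt i h)] at h1
  have posmono : ∀ i k, i < k → k < ℓ → pos i < pos k := by
    intro i k hik hk
    have hi : i < ℓ := lt_trans hik hk
    rw [hposdef]
    simp only [dif_pos hi, dif_pos hk]
    exact Subtype.coe_lt_coe.2 (σ.strictMono (show (⟨i, hi⟩ : Fin ℓ) < ⟨k, hk⟩ from hik))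
  have hmissAt : ∀ i, i < ℓ →
      p.getVert (pos i + 1) ∉ S (p.getVert (pos i)) ∧
      p.getVert (pos i) ∉ S (p.getVert (pos i + 1)) ∧
      G.Adj (p.getVert (pos i)) (p.getVert (pos i + 1)) :=
    fun i h => hmiss (pos i) (poslt i h) (posmiss i h)
  -- weight at any walk position is at most maxEdge
  have hWb : ∀ m, m < p.length → wWalk w p m ≤ maxEdge G w p := by
    intro m hm
    have hm' : m < p.edges.length := by rwa [p.length_edges]
    have hmem : p.edges.getD m s(t, t) ∈ p.edges := by
      rw [List.getD_eq_getElem?_getD, List.getElem?_eq_getElem hm']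
      exact List.getElem_mem _
    rw [wWalk, getD_map_lt w hm' s(t, t)]
    exact le_foldr_max _ _ (List.mem_map.2 ⟨_, hmem, rfl⟩)
  set N : Finset V := Finset.univ.filter
    (fun x => ∃ y ∈ p.support, H.Adj x y ∧ w s(x, y) ≤ maxEdge G w p) with hN
  set X : ℕ → Finset V := fun i => S (p.getVert (pos i)) with hX
  set Y : ℕ → Finset V := fun i => S (p.getVert (pos i + 1)) with hY
  set ω : ℕ → ℝ≥0∞ := fun i => wWalk w p (pos i) with hω
  -- membership in N
  have hXN : ∀ i, i < ℓ → X i ⊆ N := by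
    intro i hi x hx
    rw [hX] at hx
    have hP : pos i < p.length := poslt i hi
    have hadj : G.Adj (p.getVert (pos i)) x := hS1 _ x hx
    have hHadj : H.Adj (p.getVert (pos i)) x := (hS4 _ x).2 ⟨hadj, Or.inl hx⟩
    have hwle : w s(p.getVert (pos i), x) ≤ wWalk w p (pos i) := by
      rw [wWalk_eq w p hP]
      exact hS3 _ _ (hmissAt i hi).2.2 (hmissAt i hi).1 x hx
    rw [hN]
    refine Finset.mem_filter.2 ⟨Finset.mem_univ _, ⟨p.getVert (pos i), ?_, hHadj.symm, ?_⟩⟩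
    · exact SimpleGraph.Walk.mem_support_iff_exists_getVert.2 ⟨pos i, rfl, by omega⟩
    · rw [show s(x, p.getVert (pos i)) = s(p.getVert (pos i), x) from Sym2.eq_swap]
      exact le_trans hwle (hWb _ hP)
  have hYN : ∀ i, i < ℓ → Y i ⊆ N := by
    intro i hi x hx
    rw [hY] at hx
    have hP : pos i < p.length := poslt i hi
    have hadj : G.Adj (p.getVert (pos i + 1)) x := hS1 _ x hx
    have hHadj : H.Adj (p.getVert (pos i + 1)) x := (hS4 _ x).2 ⟨hadj, Or.inl hx⟩
    have hwle : w s(p.getVert (pos i + 1), x) ≤ wWalk w p (pos i) := by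
      have h1 : w s(p.getVert (pos i + 1), x) ≤ w s(p.getVert (pos i + 1), p.getVert (pos i)) :=
        hS3 _ _ (hmissAt i hi).2.2.symm (hmissAt i hi).2.1 x hx
      rw [wWalk_eq w p hP]
      rwa [show s(p.getVert (pos i + 1), p.getVert (pos i))
        = s(p.getVert (pos i), p.getVert (pos i + 1)) from Sym2.eq_swap] at h1
    rw [hN]
    refine Finset.mem_filter.2 ⟨Finset.mem_univ _, ⟨p.getVert (pos i + 1), ?_, hHadj.symm, ?_⟩⟩
    · exact SimpleGraph.Walk.mem_support_iff_exists_getVert.2 ⟨pos i + 1, rfl, by omega⟩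
    · rw [show s(x, p.getVert (pos i + 1)) = s(p.getVert (pos i + 1), x) from Sym2.eq_swap]
      exact le_trans hwle (hWb _ hP)
  -- cardinalities
  have hXc : ∀ i, i < ℓ → (X i).card = d := by
    intro i hi
    rw [hX]
    exact cardS _ _ (hmissAt i hi).2.2 (hmissAt i hi).1
  have hYc : ∀ i, i < ℓ → (Y i).card = d := by
    intro i hi
    rw [hY]
    exact cardS _ _ (hmissAt i hi).2.2.symm (hmissAt i hi).2.1
  -- weights positive and finite
  have hωpos : ∀ i, i < ℓ → ω i ≠ 0 := by
    intro i hi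
    rw [hω]
    simp only
    rw [wWalk_eq w p (poslt i hi)]
    exact (hw _ (wWalk_mem_edgeSet p (poslt i hi))).1.ne'
  have hωfin : ∀ i, i < ℓ → ω i ≠ ⊤ := fun i _ => wWalk_ne_top w hw p _
  -- injectivity of pos on intervals
  have hinjIoo : ∀ i k, k < ℓ → ∀ a ∈ Finset.Ioo i k, ∀ b ∈ Finset.Ioo i k,
      pos a = pos b → a = b := by
    intro i k hk a ha b hb hab
    rw [Finset.mem_Ioo] at ha hb
    by_contra hne
    rcases lt_or_gt_of_ne hne with h | h
    · exact absurd hab (ne_of_lt (posmono a b h (lt_trans hb.2 hk)))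
    · exact absurd hab.symm (ne_of_lt (posmono b a h (lt_trans ha.2 hk)))
  -- LL constraint
  have hLL : ∀ i k, i < k → k < ℓ → (X i ∩ X k).Nonempty →
      ∑ m ∈ Finset.Ioo i k, ω m ≤ ω k := by
    intro i k hik hk hne
    have hi : i < ℓ := lt_trans hik hk
    have hPQ : pos i < pos k := posmono i k hik hk
    have hQlt : pos k < p.length := poslt k hk
    obtain ⟨x, hx⟩ := hne
    rw [Finset.mem_inter, hX] at hx
    have h1 : G.Adj (p.getVert (pos i)) x := hS1 _ x hx.1
    have h2 : G.Adj x (p.getVert (pos k)) := (hS1 _ x hx.2).symm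
    have hQ1 : pos k - 1 + 1 = pos k := by omega
    have hkey := key_ineq w hw p hwp (pos i) (pos k - 1) (by omega) (by omega) x h1
      (by rw [hQ1]; exact h2)
    rw [hQ1] at hkey
    have himg : ∀ r ∈ Finset.Ioo i k, pos r ∈ Finset.Ioo (pos i) (pos k) := by
      intro r hr
      rw [Finset.mem_Ioo] at hr
      exact Finset.mem_Ioo.2 ⟨posmono i r hr.1 (lt_trans hr.2 hk), posmono r k hr.2 hk⟩
    have hPnotin : pos i ∉ (Finset.Ioo i k).image pos := by
      intro hc
      obtain ⟨r, hr, hrp⟩ := Finset.mem_image.1 hc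
      have := himg r hr
      rw [hrp] at this
      exact absurd (Finset.mem_Ioo.1 this).1 (lt_irrefl _)
    have hTsub : insert (pos i) ((Finset.Ioo i k).image pos) ⊆ Finset.Ico (pos i) (pos k) := by
      intro z hz
      rcases Finset.mem_insert.1 hz with rfl | hz
      · exact Finset.mem_Ico.2 ⟨le_refl _, hPQ⟩
      · obtain ⟨r, hr, rfl⟩ := Finset.mem_image.1 hz
        have := Finset.mem_Ioo.1 (himg r hr)
        exact Finset.mem_Ico.2 ⟨le_of_lt this.1, this.2⟩
    have hsum1 : wWalk w p (pos i) + ∑ r ∈ Finset.Ioo i k, wWalk w p (pos r)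
        ≤ ∑ m ∈ Finset.Ico (pos i) (pos k), wWalk w p m := by
      rw [← Finset.sum_image (hinjIoo i k hk), ← Finset.sum_insert hPnotin]
      exact Finset.sum_le_sum_of_subset hTsub
    have hub1 : w s(p.getVert (pos i), x) ≤ wWalk w p (pos i) := by
      rw [wWalk_eq w p (poslt i hi)]
      exact hS3 _ _ (hmissAt i hi).2.2 (hmissAt i hi).1 x hx.1
    have hub2 : w s(x, p.getVert (pos k)) ≤ wWalk w p (pos k) := by
      rw [show s(x, p.getVert (pos k)) = s(p.getVert (pos k), x) from Sym2.eq_swap,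
        wWalk_eq w p hQlt]
      exact hS3 _ _ (hmissAt k hk).2.2 (hmissAt k hk).1 x hx.2
    have hfinal : wWalk w p (pos i) + ∑ r ∈ Finset.Ioo i k, wWalk w p (pos r)
        ≤ wWalk w p (pos i) + wWalk w p (pos k) :=
      le_trans hsum1 (le_trans hkey (add_le_add hub1 hub2))
    exact (ENNReal.add_le_add_iff_left (wWalk_ne_top w hw p _)).1 hfinal
  -- RR constraint
  have hRR : ∀ i k, i < k → k < ℓ → (Y i ∩ Y k).Nonempty →
      ∑ m ∈ Finset.Ioo i k, ω m ≤ ω i := by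
    intro i k hik hk hne
    have hi : i < ℓ := lt_trans hik hk
    have hPQ : pos i < pos k := posmono i k hik hk
    have hQlt : pos k < p.length := poslt k hk
    obtain ⟨x, hx⟩ := hne
    rw [Finset.mem_inter, hY] at hx
    have h1 : G.Adj (p.getVert (pos i + 1)) x := hS1 _ x hx.1
    have h2 : G.Adj x (p.getVert (pos k + 1)) := (hS1 _ x hx.2).symm
    have hkey := key_ineq w hw p hwp (pos i + 1) (pos k) (by omega) (by omega) x h1 h2
    have himg : ∀ r ∈ Finset.Ioo i k, pos r ∈ Finset.Ioo (pos i) (pos k) := by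
      intro r hr
      rw [Finset.mem_Ioo] at hr
      exact Finset.mem_Ioo.2 ⟨posmono i r hr.1 (lt_trans hr.2 hk), posmono r k hr.2 hk⟩
    have hQnotin : pos k ∉ (Finset.Ioo i k).image pos := by
      intro hc
      obtain ⟨r, hr, hrp⟩ := Finset.mem_image.1 hc
      have := himg r hr
      rw [hrp] at this
      exact absurd (Finset.mem_Ioo.1 this).2 (lt_irrefl _)
    have hTsub : insert (pos k) ((Finset.Ioo i k).image pos)
        ⊆ Finset.Ico (pos i + 1) (pos k + 1) := by
      intro z hz
      rcases Finset.mem_insert.1 hz with rfl | hz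
      · exact Finset.mem_Ico.2 ⟨by omega, by omega⟩
      · obtain ⟨r, hr, rfl⟩ := Finset.mem_image.1 hz
        have := Finset.mem_Ioo.1 (himg r hr)
        exact Finset.mem_Ico.2 ⟨by omega, by omega⟩
    have hsum1 : wWalk w p (pos k) + ∑ r ∈ Finset.Ioo i k, wWalk w p (pos r)
        ≤ ∑ m ∈ Finset.Ico (pos i + 1) (pos k + 1), wWalk w p m := by
      rw [← Finset.sum_image (hinjIoo i k hk), ← Finset.sum_insert hQnotin]
      exact Finset.sum_le_sum_of_subset hTsub
    have hub1 : w s(p.getVert (pos i + 1), x) ≤ wWalk w p (pos i) := by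
      have h1' : w s(p.getVert (pos i + 1), x)
          ≤ w s(p.getVert (pos i + 1), p.getVert (pos i)) :=
        hS3 _ _ (hmissAt i hi).2.2.symm (hmissAt i hi).2.1 x hx.1
      rw [wWalk_eq w p (poslt i hi)]
      rwa [show s(p.getVert (pos i + 1), p.getVert (pos i))
        = s(p.getVert (pos i), p.getVert (pos i + 1)) from Sym2.eq_swap] at h1'
    have hub2 : w s(x, p.getVert (pos k + 1)) ≤ wWalk w p (pos k) := by
      have h2' : w s(p.getVert (pos k + 1), x)
          ≤ w s(p.getVert (pos k + 1), p.getVert (pos k)) :=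
        hS3 _ _ (hmissAt k hk).2.2.symm (hmissAt k hk).2.1 x hx.2
      rw [show s(x, p.getVert (pos k + 1)) = s(p.getVert (pos k + 1), x) from Sym2.eq_swap,
        wWalk_eq w p hQlt]
      rwa [show s(p.getVert (pos k + 1), p.getVert (pos k))
        = s(p.getVert (pos k), p.getVert (pos k + 1)) from Sym2.eq_swap] at h2'
    have hfinal : wWalk w p (pos k) + ∑ r ∈ Finset.Ioo i k, wWalk w p (pos r)
        ≤ wWalk w p (pos k) + wWalk w p (pos i) := by
      refine le_trans hsum1 (le_trans hkey ?_)
      calc w s(p.getVert (pos i + 1), x) + w s(x, p.getVert (pos k + 1))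
          ≤ wWalk w p (pos i) + wWalk w p (pos k) := add_le_add hub1 hub2
      _ = wWalk w p (pos k) + wWalk w p (pos i) := add_comm _ _
    exact (ENNReal.add_le_add_iff_left (wWalk_ne_top w hw p _)).1 hfinal
  -- apply the abstract counting lemma
  have habs : d * ℓ ≤ 6 * N.card :=
    abs_count d ℓ ω X Y N hωpos hωfin hXc hYc hXN hYN hLL hRR
  refine ⟨N, ?_, ?_⟩
  · rw [div_le_iff₀ (by norm_num : (0 : ℝ) < 6)]
    have h6 : ((d * ℓ : ℕ) : ℝ) ≤ ((6 * N.card : ℕ) : ℝ) := Nat.cast_le.2 habs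
    push_cast at h6
    linarith
  · intro x hx
    rw [hN] at hx
    exact (Finset.mem_filter.1 hx).2
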